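/- Let p ≠ 5 be a prime and let N_p denote the number of points in ℙ^4(𝔽_p) on x_0^5+x_1^5+x_2^5+x_3^5+x_4^5−5x_0x_1x_2x_3x_4=0. Define the complex numbers A := Σ_{z, x_1 ∈ 𝔽_p^*} θ(z(1+x_1^5)), B := Σ_{z, x_1, x_2 ∈ 𝔽_p^*} θ(z(1+x_1^5+x_2^5)), C := Σ_{z, x_1, x_2, x_3 ∈ 𝔽_p^*} θ(z(1+x_1^5+x_2^5+x_3^5)), and D := Σ_{z, x_1, x_2, x_3, x_4 ∈ 𝔽_p^*} θ(z(1+x_1^5+x_2^5+x_3^5+x_4^5−5x_1x_2x_3x_4)). Then p·N_p = p^4 + p^3 + p^2 + p − 4 + 10A + 10B + 5C + D. -/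

import Mathlib

open Finset

/-- The standard additive character `θ(a) = e^{2πia/p}` on `𝔽_p`. -/
noncomputable def theta (p : ℕ) (a : ZMod p) : ℂ :=
  Complex.exp (2 * Real.pi * Complex.I * (ZMod.val a : ℂ) / (p : ℂ))

/-- The Gauss sum `G(χ) = ∑_{x ∈ 𝔽_p} χ(x) θ(x)`. -/
noncomputable def gaussS (p : ℕ) [NeZero p] (χ : MulChar (ZMod p) ℂ) : ℂ :=
  ∑ x : ZMod p, χ x * theta p x

/-- The generalized Jacobi sum `J(χ₁,χ₂,χ₃) = ∑_{t₁+t₂+t₃=1} χ₁(t₁)χ₂(t₂)χ₃(t₃)`. -/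
noncomputable def jacobi3 (p : ℕ) [NeZero p] (χ₁ χ₂ χ₃ : MulChar (ZMod p) ℂ) : ℂ :=
  ∑ v ∈ Finset.univ.filter (fun v : ZMod p × ZMod p × ZMod p => v.1 + v.2.1 + v.2.2 = 1),
    χ₁ v.1 * χ₂ v.2.1 * χ₃ v.2.2


/-- The quintic `x₀⁵+x₁⁵+x₂⁵+x₃⁵+x₄⁵ - 5x₀x₁x₂x₃x₄` evaluated on a vector over `𝔽_p`. -/
def quinticF (p : ℕ) (x : Fin 5 → ZMod p) : ZMod p :=
  (∑ i, x i ^ 5) - 5 * ∏ i, x i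

/-- The number of points in `ℙ⁴(𝔽_p)` on the Dwork quintic. -/
noncomputable def Np (p : ℕ) [Fact p.Prime] : ℕ :=
  Nat.card {v : Projectivization (ZMod p) (Fin 5 → ZMod p) // quinticF p v.rep = 0}

section Aux

variable (p : ℕ) [Fact p.Prime]

private lemma PCzeta_pow : (Complex.exp (2 * Real.pi * Complex.I / p)) ^ p = 1 := by
  have hp : (p : ℕ) ≠ 0 := (Fact.out : p.Prime).ne_zero
  exact (Complex.isPrimitiveRoot_exp p hp).pow_eq_one

/-- theta as an additive character. -/
private noncomputable def PCpsi : AddChar (ZMod p) ℂ := AddChar.zmodChar p (PCzeta_pow p)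

private lemma PCtheta_eq (a : ZMod p) : theta p a = PCpsi p a := by
  rw [PCpsi, AddChar.zmodChar_apply, theta, ← Complex.exp_nat_mul]
  ring_nf

private lemma PCpsi_prim : (PCpsi p).IsPrimitive := by
  have hp : (p : ℕ) ≠ 0 := (Fact.out : p.Prime).ne_zero
  exact AddChar.zmodChar_primitive_of_primitive_root p (Complex.isPrimitiveRoot_exp p hp)

private lemma PCtheta_orth (b : ZMod p) :
    ∑ z : ZMod p, theta p (z * b) = if b = 0 then (p : ℂ) else 0 := by
  classical
  simp_rw [PCtheta_eq]
  rw [AddChar.sum_mulShift b (PCpsi_prim p)]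
  simp [ZMod.card]

private lemma PCtheta_zero : theta p 0 = 1 := by simp [theta]

private lemma PCsum_split (f : ZMod p → ℂ) :
    ∑ a : ZMod p, f a = f 0 + ∑ u : (ZMod p)ˣ, f u := by
  classical
  rw [← Finset.add_sum_erase _ f (mem_univ 0)]
  congr 1
  apply Finset.sum_nbij' (fun a => if h : (a : ZMod p) ≠ 0 then Units.mk0 a h else 1)
      (fun u => (u : ZMod p)) <;> intro a ha <;>
    simp_all [Units.ne_zero]

private lemma PCsum_units_theta : ∑ u : (ZMod p)ˣ, theta p u = -1 := by
  have h := PCtheta_orth p 1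
  rw [if_neg one_ne_zero] at h
  simp_rw [mul_one] at h
  rw [PCsum_split p (theta p), PCtheta_zero] at h
  linear_combination h

private lemma PCcard_units : ((Finset.univ : Finset (ZMod p)ˣ).card : ℂ) = (p : ℂ) - 1 := by
  rw [Finset.card_univ, ZMod.card_units p,
    Nat.cast_sub (Fact.out : p.Prime).one_le, Nat.cast_one]

/-! ### Homogeneity and the affine/projective count -/

private lemma PCquintic_smul (c : ZMod p) (x : Fin 5 → ZMod p) :
    quinticF p (c • x) = c ^ 5 * quinticF p x := by
  simp only [quinticF, Pi.smul_apply, smul_eq_mul, mul_pow, ← Finset.mul_sum,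
    Finset.prod_mul_distrib, Finset.prod_const, Finset.card_univ, Fintype.card_fin]
  ring

private lemma PCcount_affine :
    (Finset.univ.filter fun x : Fin 5 → ZMod p => x ≠ 0 ∧ quinticF p x = 0).card
      = (p - 1) * Np p := by
  classical
  haveI : Finite (Projectivization (ZMod p) (Fin 5 → ZMod p)) :=
    Quotient.finite _
  haveI : Fintype (Projectivization (ZMod p) (Fin 5 → ZMod p)) := Fintype.ofFinite _
  set T : Finset (Projectivization (ZMod p) (Fin 5 → ZMod p)) :=
    Finset.univ.filter (fun v => quinticF p v.rep = 0) with hT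
  have hNp : Np p = T.card := by
    rw [Np, Nat.card_eq_fintype_card, Fintype.card_subtype]
  have hone : (fun _ => 1 : Fin 5 → ZMod p) ≠ 0 := by
    intro h
    have := congrFun h 0
    simp at this
  set f : (Fin 5 → ZMod p) → Projectivization (ZMod p) (Fin 5 → ZMod p) :=
    fun x => if h : x ≠ 0 then Projectivization.mk (ZMod p) x h
      else Projectivization.mk (ZMod p) _ hone with hf
  have hmem : ∀ x ∈ (Finset.univ.filter fun x : Fin 5 → ZMod p =>
      x ≠ 0 ∧ quinticF p x = 0), f x ∈ T := by
    rintro x hx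
    rw [mem_filter] at hx
    obtain ⟨-, hx0, hxF⟩ := hx
    rw [hT, mem_filter]
    refine ⟨mem_univ _, ?_⟩
    rw [hf]
    simp only [dif_pos hx0]
    obtain ⟨a, ha⟩ := Projectivization.exists_smul_eq_mk_rep (ZMod p) x hx0
    rw [← ha, Units.smul_def, PCquintic_smul, hxF, mul_zero]
  rw [Finset.card_eq_sum_card_fiberwise hmem]
  have hfib : ∀ v ∈ T,
      ((Finset.univ.filter fun x : Fin 5 → ZMod p => x ≠ 0 ∧ quinticF p x = 0).filter
        fun x => f x = v).card = p - 1 := by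
    intro v hv
    rw [hT, mem_filter] at hv
    rw [← ZMod.card_units p, ← Finset.card_univ]
    refine (Finset.card_bij (fun (a : (ZMod p)ˣ) _ => (a : ZMod p) • v.rep) ?_ ?_ ?_).symm
    · intro a _
      have hrep := v.rep_nonzero
      have hne : (a : ZMod p) • v.rep ≠ 0 := smul_ne_zero (Units.ne_zero a) hrep
      simp only [mem_filter, mem_univ, true_and]
      refine ⟨⟨hne, ?_⟩, ?_⟩
      · rw [PCquintic_smul, hv.2, mul_zero]
      · rw [hf]
        simp only [dif_pos hne]
        exact ((Projectivization.mk_eq_mk_iff (ZMod p) _ _ hne v.rep_nonzero).2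
          ⟨a, (Units.smul_def a v.rep).symm⟩).trans v.mk_rep
    · intro a _ b _ hab
      have hrep := v.rep_nonzero
      obtain ⟨i, hi⟩ := Function.ne_iff.mp hrep
      have := congrFun hab i
      simp only [Pi.smul_apply, smul_eq_mul, Pi.zero_apply] at this hi
      exact Units.ext (mul_right_cancel₀ hi this)
    · intro x hx
      rw [mem_filter, mem_filter] at hx
      obtain ⟨⟨-, hx0, hxF⟩, hfx⟩ := hx
      rw [hf] at hfx
      simp only [dif_pos hx0] at hfx
      rw [← v.mk_rep, Projectivization.mk_eq_mk_iff] at hfx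
      obtain ⟨a, ha⟩ := hfx
      exact ⟨a, mem_univ _, by rw [← ha, Units.smul_def]⟩
  rw [Finset.sum_congr rfl hfib, Finset.sum_const, smul_eq_mul, hNp, mul_comm]

private lemma PCquintic_zero : quinticF p 0 = 0 := by
  simp [quinticF]

private lemma PCcount_all :
    (Finset.univ.filter fun x : Fin 5 → ZMod p => quinticF p x = 0).card
      = 1 + (p - 1) * Np p := by
  classical
  rw [← PCcount_affine p]
  have hsplit := Finset.card_filter_add_card_filter_not
    (s := Finset.univ.filter fun x : Fin 5 → ZMod p => quinticF p x = 0)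
    (p := fun x => x = 0)
  rw [← hsplit]
  congr 1
  · have : (Finset.univ.filter fun x : Fin 5 → ZMod p => quinticF p x = 0).filter
        (fun x => x = 0) = {0} := by
      ext x
      simp only [mem_filter, mem_univ, true_and, mem_singleton]
      constructor
      · rintro ⟨-, h⟩; exact h
      · rintro rfl; exact ⟨PCquintic_zero p, rfl⟩
    rw [this, Finset.card_singleton]
  · have : (Finset.univ.filter fun x : Fin 5 → ZMod p => quinticF p x = 0).filter
        (fun x => ¬ x = 0)
        = Finset.univ.filter fun x : Fin 5 → ZMod p => x ≠ 0 ∧ quinticF p x = 0 := by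
      rw [Finset.filter_filter]
      ext x
      simp only [mem_filter, mem_univ, true_and]
      tauto
    rw [this]

/-! ### The reindexing lemmas -/

private lemma PCT0 : ∑ _z : (ZMod p)ˣ, theta p 0 = (p : ℂ) - 1 := by
  rw [PCtheta_zero, Finset.sum_const, nsmul_eq_mul, mul_one, PCcard_units]

private lemma PCT1 : (∑ z : (ZMod p)ˣ, ∑ a : (ZMod p)ˣ,
      theta p ((z : ZMod p) * (a : ZMod p) ^ 5)) = -((p : ℂ) - 1) := by
  rw [Finset.sum_comm]
  have key : ∀ a : (ZMod p)ˣ, (∑ z : (ZMod p)ˣ,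
      theta p ((z : ZMod p) * (a : ZMod p) ^ 5)) = -1 := by
    intro a
    rw [← PCsum_units_theta p]
    apply Fintype.sum_equiv (Equiv.mulRight (a ^ 5))
    intro z
    simp only [Equiv.coe_mulRight]
    push_cast
    ring_nf
  rw [Finset.sum_congr rfl (fun a _ => key a), Finset.sum_const, nsmul_eq_mul,
    PCcard_units]
  ring

private lemma PCT2 : (∑ z : (ZMod p)ˣ, ∑ a : (ZMod p)ˣ, ∑ b : (ZMod p)ˣ,
      theta p ((z : ZMod p) * ((a : ZMod p) ^ 5 + (b : ZMod p) ^ 5)))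
    = ((p : ℂ) - 1) * ∑ z : (ZMod p)ˣ, ∑ b : (ZMod p)ˣ,
      theta p ((z : ZMod p) * (1 + (b : ZMod p) ^ 5)) := by
  rw [Finset.sum_comm]
  have key : ∀ a : (ZMod p)ˣ, (∑ z : (ZMod p)ˣ, ∑ b : (ZMod p)ˣ,
      theta p ((z : ZMod p) * ((a : ZMod p) ^ 5 + (b : ZMod p) ^ 5)))
      = ∑ z : (ZMod p)ˣ, ∑ b : (ZMod p)ˣ,
      theta p ((z : ZMod p) * (1 + (b : ZMod p) ^ 5)) := by
    intro a
    have ha : (a : ZMod p) ≠ 0 := Units.ne_zero a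
    apply Fintype.sum_equiv (Equiv.mulRight (a ^ 5))
    intro z
    apply Fintype.sum_equiv (Equiv.mulRight a⁻¹)
    intro b
    simp only [Equiv.coe_mulRight]
    congr 1
    push_cast [Units.val_inv_eq_inv_val]
    field_simp
  rw [Finset.sum_congr rfl (fun a _ => key a), Finset.sum_const, nsmul_eq_mul, PCcard_units]

private lemma PCT3 : (∑ z : (ZMod p)ˣ, ∑ a : (ZMod p)ˣ, ∑ b : (ZMod p)ˣ, ∑ c : (ZMod p)ˣ,
      theta p ((z : ZMod p) * ((a : ZMod p) ^ 5 + (b : ZMod p) ^ 5 + (c : ZMod p) ^ 5)))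
    = ((p : ℂ) - 1) * ∑ z : (ZMod p)ˣ, ∑ b : (ZMod p)ˣ, ∑ c : (ZMod p)ˣ,
      theta p ((z : ZMod p) * (1 + (b : ZMod p) ^ 5 + (c : ZMod p) ^ 5)) := by
  rw [Finset.sum_comm]
  have key : ∀ a : (ZMod p)ˣ, (∑ z : (ZMod p)ˣ, ∑ b : (ZMod p)ˣ, ∑ c : (ZMod p)ˣ,
      theta p ((z : ZMod p) * ((a : ZMod p) ^ 5 + (b : ZMod p) ^ 5 + (c : ZMod p) ^ 5)))
      = ∑ z : (ZMod p)ˣ, ∑ b : (ZMod p)ˣ, ∑ c : (ZMod p)ˣ,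
      theta p ((z : ZMod p) * (1 + (b : ZMod p) ^ 5 + (c : ZMod p) ^ 5)) := by
    intro a
    have ha : (a : ZMod p) ≠ 0 := Units.ne_zero a
    apply Fintype.sum_equiv (Equiv.mulRight (a ^ 5))
    intro z
    apply Fintype.sum_equiv (Equiv.mulRight a⁻¹)
    intro b
    apply Fintype.sum_equiv (Equiv.mulRight a⁻¹)
    intro c
    simp only [Equiv.coe_mulRight]
    congr 1
    push_cast [Units.val_inv_eq_inv_val]
    field_simp
  rw [Finset.sum_congr rfl (fun a _ => key a), Finset.sum_const, nsmul_eq_mul, PCcard_units]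

private lemma PCT4 : (∑ z : (ZMod p)ˣ, ∑ a : (ZMod p)ˣ, ∑ b : (ZMod p)ˣ, ∑ c : (ZMod p)ˣ,
      ∑ d : (ZMod p)ˣ,
      theta p ((z : ZMod p) * ((a : ZMod p) ^ 5 + (b : ZMod p) ^ 5 + (c : ZMod p) ^ 5
        + (d : ZMod p) ^ 5)))
    = ((p : ℂ) - 1) * ∑ z : (ZMod p)ˣ, ∑ b : (ZMod p)ˣ, ∑ c : (ZMod p)ˣ, ∑ d : (ZMod p)ˣ,
      theta p ((z : ZMod p) * (1 + (b : ZMod p) ^ 5 + (c : ZMod p) ^ 5 + (d : ZMod p) ^ 5)) := by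
  rw [Finset.sum_comm]
  have key : ∀ a : (ZMod p)ˣ, (∑ z : (ZMod p)ˣ, ∑ b : (ZMod p)ˣ, ∑ c : (ZMod p)ˣ,
      ∑ d : (ZMod p)ˣ,
      theta p ((z : ZMod p) * ((a : ZMod p) ^ 5 + (b : ZMod p) ^ 5 + (c : ZMod p) ^ 5
        + (d : ZMod p) ^ 5)))
      = ∑ z : (ZMod p)ˣ, ∑ b : (ZMod p)ˣ, ∑ c : (ZMod p)ˣ, ∑ d : (ZMod p)ˣ,
      theta p ((z : ZMod p) * (1 + (b : ZMod p) ^ 5 + (c : ZMod p) ^ 5 + (d : ZMod p) ^ 5)) := by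
    intro a
    have ha : (a : ZMod p) ≠ 0 := Units.ne_zero a
    apply Fintype.sum_equiv (Equiv.mulRight (a ^ 5))
    intro z
    apply Fintype.sum_equiv (Equiv.mulRight a⁻¹)
    intro b
    apply Fintype.sum_equiv (Equiv.mulRight a⁻¹)
    intro c
    apply Fintype.sum_equiv (Equiv.mulRight a⁻¹)
    intro d
    simp only [Equiv.coe_mulRight]
    congr 1
    push_cast [Units.val_inv_eq_inv_val]
    field_simp
  rw [Finset.sum_congr rfl (fun a _ => key a), Finset.sum_const, nsmul_eq_mul, PCcard_units]

private lemma PCT5 : (∑ z : (ZMod p)ˣ, ∑ a : (ZMod p)ˣ, ∑ b : (ZMod p)ˣ, ∑ c : (ZMod p)ˣ,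
      ∑ d : (ZMod p)ˣ, ∑ e : (ZMod p)ˣ,
      theta p ((z : ZMod p) * ((a : ZMod p) ^ 5 + (b : ZMod p) ^ 5 + (c : ZMod p) ^ 5
        + (d : ZMod p) ^ 5 + (e : ZMod p) ^ 5
        - 5 * ((a : ZMod p) * (b : ZMod p) * (c : ZMod p) * (d : ZMod p) * (e : ZMod p)))))
    = ((p : ℂ) - 1) * ∑ z : (ZMod p)ˣ, ∑ b : (ZMod p)ˣ, ∑ c : (ZMod p)ˣ, ∑ d : (ZMod p)ˣ,
      ∑ e : (ZMod p)ˣ,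
      theta p ((z : ZMod p) * (1 + (b : ZMod p) ^ 5 + (c : ZMod p) ^ 5 + (d : ZMod p) ^ 5
        + (e : ZMod p) ^ 5
        - 5 * (b : ZMod p) * (c : ZMod p) * (d : ZMod p) * (e : ZMod p))) := by
  rw [Finset.sum_comm]
  have key : ∀ a : (ZMod p)ˣ, (∑ z : (ZMod p)ˣ, ∑ b : (ZMod p)ˣ, ∑ c : (ZMod p)ˣ,
      ∑ d : (ZMod p)ˣ, ∑ e : (ZMod p)ˣ,
      theta p ((z : ZMod p) * ((a : ZMod p) ^ 5 + (b : ZMod p) ^ 5 + (c : ZMod p) ^ 5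
        + (d : ZMod p) ^ 5 + (e : ZMod p) ^ 5
        - 5 * ((a : ZMod p) * (b : ZMod p) * (c : ZMod p) * (d : ZMod p) * (e : ZMod p)))))
      = ∑ z : (ZMod p)ˣ, ∑ b : (ZMod p)ˣ, ∑ c : (ZMod p)ˣ, ∑ d : (ZMod p)ˣ, ∑ e : (ZMod p)ˣ,
      theta p ((z : ZMod p) * (1 + (b : ZMod p) ^ 5 + (c : ZMod p) ^ 5 + (d : ZMod p) ^ 5
        + (e : ZMod p) ^ 5
        - 5 * (b : ZMod p) * (c : ZMod p) * (d : ZMod p) * (e : ZMod p))) := by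
    intro a
    have ha : (a : ZMod p) ≠ 0 := Units.ne_zero a
    apply Fintype.sum_equiv (Equiv.mulRight (a ^ 5))
    intro z
    apply Fintype.sum_equiv (Equiv.mulRight a⁻¹)
    intro b
    apply Fintype.sum_equiv (Equiv.mulRight a⁻¹)
    intro c
    apply Fintype.sum_equiv (Equiv.mulRight a⁻¹)
    intro d
    apply Fintype.sum_equiv (Equiv.mulRight a⁻¹)
    intro e
    simp only [Equiv.coe_mulRight]
    congr 1
    push_cast [Units.val_inv_eq_inv_val]
    field_simp
  rw [Finset.sum_congr rfl (fun a _ => key a), Finset.sum_const, nsmul_eq_mul, PCcard_units]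

/-! ### Converting the sum over `Fin 5 → ZMod p` to an iterated sum -/

private def PCe5 : (ZMod p × ZMod p × ZMod p × ZMod p × ZMod p) ≃ (Fin 5 → ZMod p) where
  toFun q := ![q.1, q.2.1, q.2.2.1, q.2.2.2.1, q.2.2.2.2]
  invFun x := (x 0, x 1, x 2, x 3, x 4)
  left_inv q := rfl
  right_inv x := by funext i; fin_cases i <;> rfl

private lemma PCquintic_explicit (a b c d e : ZMod p) :
    quinticF p ![a, b, c, d, e] = a^5 + b^5 + c^5 + d^5 + e^5 - 5*(a*b*c*d*e) := by
  simp [quinticF, Fin.sum_univ_five, Fin.prod_univ_five]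

end Aux

set_option maxHeartbeats 3000000 in
/-- Point-count formula for the Dwork quintic via the additive character. -/
theorem point_count_additive (p : ℕ) [Fact p.Prime] (hp5 : p ≠ 5)
    (A B C D : ℂ)
    (hA : A = ∑ z : (ZMod p)ˣ, ∑ x₁ : (ZMod p)ˣ,
        theta p ((z : ZMod p) * (1 + (x₁ : ZMod p) ^ 5)))
    (hB : B = ∑ z : (ZMod p)ˣ, ∑ x₁ : (ZMod p)ˣ, ∑ x₂ : (ZMod p)ˣ,
        theta p ((z : ZMod p) * (1 + (x₁ : ZMod p) ^ 5 + (x₂ : ZMod p) ^ 5)))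
    (hC : C = ∑ z : (ZMod p)ˣ, ∑ x₁ : (ZMod p)ˣ, ∑ x₂ : (ZMod p)ˣ, ∑ x₃ : (ZMod p)ˣ,
        theta p ((z : ZMod p) *
          (1 + (x₁ : ZMod p) ^ 5 + (x₂ : ZMod p) ^ 5 + (x₃ : ZMod p) ^ 5)))
    (hD : D = ∑ z : (ZMod p)ˣ, ∑ x₁ : (ZMod p)ˣ, ∑ x₂ : (ZMod p)ˣ, ∑ x₃ : (ZMod p)ˣ,
        ∑ x₄ : (ZMod p)ˣ,
        theta p ((z : ZMod p) *
          (1 + (x₁ : ZMod p) ^ 5 + (x₂ : ZMod p) ^ 5 + (x₃ : ZMod p) ^ 5 + (x₄ : ZMod p) ^ 5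
            - 5 * (x₁ : ZMod p) * (x₂ : ZMod p) * (x₃ : ZMod p) * (x₄ : ZMod p)))) :
    (p : ℂ) * (Np p : ℂ) =
      (p : ℂ) ^ 4 + (p : ℂ) ^ 3 + (p : ℂ) ^ 2 + (p : ℂ) - 4 + 10 * A + 10 * B + 5 * C + D := by
  classical
  have hp : p.Prime := Fact.out
  -- the main character sum
  set S : ℂ := ∑ z : (ZMod p)ˣ, ∑ x : Fin 5 → ZMod p, theta p ((z : ZMod p) * quinticF p x)
    with hS
  -- Step A : p * N* = p^5 + S
  have stepA : (p : ℂ) * (1 + ((p : ℂ) - 1) * (Np p : ℂ)) = (p : ℂ) ^ 5 + S := by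
    have h1 : (∑ x : Fin 5 → ZMod p, ∑ z : ZMod p, theta p (z * quinticF p x))
        = (p : ℂ) * (1 + ((p : ℂ) - 1) * (Np p : ℂ)) := by
      have := fun x : Fin 5 → ZMod p => PCtheta_orth p (quinticF p x)
      rw [Finset.sum_congr rfl (fun x _ => this x)]
      rw [Finset.sum_ite, Finset.sum_const, Finset.sum_const_zero, add_zero, nsmul_eq_mul]
      rw [PCcount_all p]
      push_cast [Nat.cast_sub hp.one_le]
      ring
    have h2 : (∑ x : Fin 5 → ZMod p, ∑ z : ZMod p, theta p (z * quinticF p x))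
        = (p : ℂ) ^ 5 + S := by
      have hsplit : ∀ x : Fin 5 → ZMod p, (∑ z : ZMod p, theta p (z * quinticF p x))
          = 1 + ∑ z : (ZMod p)ˣ, theta p ((z : ZMod p) * quinticF p x) := by
        intro x
        rw [PCsum_split p (fun z => theta p (z * quinticF p x))]
        rw [zero_mul, PCtheta_zero]
      rw [Finset.sum_congr rfl (fun x _ => hsplit x), Finset.sum_add_distrib,
        Finset.sum_const, Finset.card_univ, nsmul_eq_mul, mul_one, hS, Finset.sum_comm]
      congr 1
      rw [show Fintype.card (Fin 5 → ZMod p) = p ^ 5 by simp [ZMod.card]]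
      push_cast
      ring
    rw [← h1, h2]
  -- Step C : S = (p-1) * (-4 + 10A + 10B + 5C + D)
  have stepC : S = ((p : ℂ) - 1) * (-4 + 10 * A + 10 * B + 5 * C + D) := by
    have h1 : ∀ z : (ZMod p)ˣ, (∑ x : Fin 5 → ZMod p, theta p ((z : ZMod p) * quinticF p x))
        = ∑ a : ZMod p, ∑ b : ZMod p, ∑ c : ZMod p, ∑ d : ZMod p, ∑ e : ZMod p,
          theta p ((z : ZMod p) * (a^5 + b^5 + c^5 + d^5 + e^5 - 5*(a*b*c*d*e))) := by
      intro z
      rw [← Equiv.sum_comp (PCe5 p) (fun x => theta p ((z : ZMod p) * quinticF p x))]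
      simp only [Fintype.sum_prod_type]
      simp only [show ∀ q, PCe5 p q = ![q.1, q.2.1, q.2.2.1, q.2.2.2.1, q.2.2.2.2] from
        fun _ => rfl, PCquintic_explicit]
    rw [hS]
    rw [Finset.sum_congr rfl (fun z _ => h1 z)]
    simp only [PCsum_split]
    simp only [Finset.sum_add_distrib]
    simp only [zero_pow, OfNat.ofNat_ne_zero, ne_eq, not_false_iff, mul_zero, zero_mul,
      add_zero, zero_add, sub_zero, mul_one, one_mul]
    rw [PCT0 p, PCT1 p, PCT2 p, PCT3 p, PCT4 p, PCT5 p, ← hA, ← hB, ← hC, ← hD]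
    ring
  -- assemble
  have hp1 : (p : ℂ) - 1 ≠ 0 := by
    refine sub_ne_zero.mpr ?_
    exact_mod_cast hp.ne_one
  apply mul_left_cancel₀ hp1
  rw [stepC] at stepA
  linear_combination stepA
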